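/- Define F'_i as a new sink with a single parent equal to the sink of a Fibonacci tree F_i. For every i ≥ 2, there exist strategies solving the Regression Search Problem on F_i and on F'_{i−1} using at most i − 1 queries in the worst case. -/

import Mathlib

/-- A strategy is a binary decision tree: internal nodes are queried vertices,
leaves identify the faulty vertex. -/
inductive Strategy (V : Type) : Type where
  | leaf : V → Strategy V
  | node : V → Strategy V → Strategy V → Strategy V

namespace Strategy

/-- The worst-case number of queries of a strategy is the height of the tree. -/
def height {V : Type} : Strategy V → ℕ
  | leaf _ => 0
  | node _ l r => 1 + max l.height r.height

open Classical in
/-- Running a strategy: `anc u v` means `u` is an ancestor of `v` (including `u = v`).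
A query of `q` answers "bugged" (left subtree) iff the faulty vertex `f` is an ancestor
of `q`, and "clean" (right subtree) otherwise. The result is the vertex identified at
the reached leaf. -/
noncomputable def run {V : Type} (anc : V → V → Prop) : Strategy V → V → V
  | leaf v, _ => v
  | node q l r, f => if anc f q then run anc l f else run anc r f

end Strategy


/-- Shapes of rooted in-trees: a single vertex, a sink with one parent subtree, or a
sink with two parent subtrees. -/
inductive ITree : Type where
  | leaf : ITree
  | node1 : ITree → ITree
  | node2 : ITree → ITree → ITree

/-- The vertices of an in-tree shape. -/
def Pos : ITree → Type
  | .leaf => PUnit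
  | .node1 t => Pos t ⊕ PUnit
  | .node2 t s => (Pos t ⊕ Pos s) ⊕ PUnit

def posFintype : ∀ t : ITree, Fintype (Pos t)
  | .leaf => inferInstanceAs (Fintype PUnit)
  | .node1 t =>
      letI := posFintype t
      inferInstanceAs (Fintype (Pos t ⊕ PUnit))
  | .node2 t s =>
      letI := posFintype t
      letI := posFintype s
      inferInstanceAs (Fintype ((Pos t ⊕ Pos s) ⊕ PUnit))

attribute [instance] posFintype

/-- The sink (root) of an in-tree. -/
def sinkOf : ∀ t : ITree, Pos t
  | .leaf => PUnit.unit
  | .node1 _ => Sum.inr PUnit.unit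
  | .node2 _ _ => Sum.inr PUnit.unit

/-- The arcs of an in-tree: all arcs are directed towards the sink. -/
def edgeOf : ∀ t : ITree, Pos t → Pos t → Prop
  | .node1 t, .inl a, .inl b => edgeOf t a b
  | .node1 t, .inl a, .inr _ => a = sinkOf t
  | .node2 t _, .inl (.inl a), .inl (.inl b) => edgeOf t a b
  | .node2 _ s, .inl (.inr a), .inl (.inr b) => edgeOf s a b
  | .node2 t _, .inl (.inl a), .inr _ => a = sinkOf t
  | .node2 _ s, .inl (.inr a), .inr _ => a = sinkOf s
  | _, _, _ => False

/-- The `i`-th Fibonacci tree `F_i` (indices `i ≥ 1`; `FibTree 0` is a dummy value):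
`F₁` is a single vertex, `F₂` is a single arc, and `F_{i+1}` is a sink whose two parents
are the sinks of disjoint copies of `F_i` and `F_{i-1}`. -/
def FibTree : ℕ → ITree
  | 0 => .leaf
  | 1 => .leaf
  | 2 => .node1 .leaf
  | (n + 3) => .node2 (FibTree (n + 2)) (FibTree (n + 1))

/-! ### Auxiliary material -/

namespace Strategy

def map {V W : Type} (g : V → W) : Strategy V → Strategy W
  | leaf v => leaf (g v)
  | node q l r => node (g q) (map g l) (map g r)

theorem height_map {V W : Type} (g : V → W) (s : Strategy V) :
    (s.map g).height = s.height := by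
  induction s with
  | leaf v => rfl
  | node q l r ihl ihr => simp [map, height, ihl, ihr]

theorem run_map {V W : Type} (anc : W → W → Prop) (anc' : V → V → Prop) (g : V → W)
    (s : Strategy V) (f : V) (h : ∀ q, anc (g f) (g q) ↔ anc' f q) :
    (s.map g).run anc (g f) = g (s.run anc' f) := by
  induction s with
  | leaf v => rfl
  | node q l r ihl ihr =>
    simp only [map, run]
    by_cases hq : anc' f q
    · rw [if_pos ((h q).2 hq), if_pos hq, ihl]
    · rw [if_neg (fun hh => hq ((h q).1 hh)), if_neg hq, ihr]

end Strategy

open Relation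

theorem rtg_dead {V : Type} {r : V → V → Prop} {a b : V}
    (h : ReflTransGen r a b) (ha : ∀ c, ¬ r a c) : a = b := by
  rcases ReflTransGen.cases_head h with rfl | ⟨c, hc, _⟩
  · rfl
  · exact absurd hc (ha c)

theorem rtg_invariant {V : Type} {r : V → V → Prop} {P : V → Prop}
    (hP : ∀ x y, P x → r x y → P y) {a b : V}
    (h : ReflTransGen r a b) (ha : P a) : P b := by
  induction h with
  | refl => exact ha
  | tail _ h2 ih => exact hP _ _ ih h2

theorem rtg_reflect {V W : Type} {r' : V → V → Prop} {r : W → W → Prop} (g : V → W)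
    (hinj : Function.Injective g)
    (hstep : ∀ u w, r (g u) w →
      (∃ v, w = g v ∧ r' u v) ∨ ((∀ v, w ≠ g v) ∧ ∀ z, ¬ r w z))
    {a b : V} (h : ReflTransGen r (g a) (g b)) : ReflTransGen r' a b := by
  suffices H : ∀ w, ReflTransGen r w (g b) → ∀ u, w = g u → ReflTransGen r' u b by
    exact H _ h a rfl
  intro w hw
  induction hw using ReflTransGen.head_induction_on with
  | refl => intro u hu; rw [hinj hu.symm]
  | head h' h ih =>
    rename_i x c
    intro u hu
    subst hu
    rcases hstep u c h' with ⟨v, rfl, hv⟩ | ⟨hnot, hdead⟩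
    · exact ReflTransGen.head hv (ih v rfl)
    · exact absurd (rtg_dead h hdead) (hnot b)

/-- Ancestor relation of a tree shape. -/
def ancOf (t : ITree) : Pos t → Pos t → Prop :=
  fun u v => ReflTransGen (edgeOf t) u v

/-- Every vertex reaches the sink. -/
theorem reach_sink : ∀ (t : ITree) (v : Pos t), ancOf t v (sinkOf t)
  | .leaf, .unit => ReflTransGen.refl
  | .node1 t, .inl a =>
      ReflTransGen.tail
        (ReflTransGen.lift (r := edgeOf t) Sum.inl (fun _ _ h => h) _ _ (reach_sink t a))
        (show edgeOf (.node1 t) (.inl (sinkOf t)) (.inr .unit) from rfl)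
  | .node1 _, .inr .unit => ReflTransGen.refl
  | .node2 t s, .inl (.inl a) =>
      ReflTransGen.tail
        (ReflTransGen.lift (r := edgeOf t) (fun x => Sum.inl (Sum.inl x))
          (fun _ _ h => h) _ _ (reach_sink t a))
        (show edgeOf (.node2 t s) (.inl (.inl (sinkOf t))) (.inr .unit) from rfl)
  | .node2 t s, .inl (.inr a) =>
      ReflTransGen.tail
        (ReflTransGen.lift (r := edgeOf s) (fun x => Sum.inl (Sum.inr x))
          (fun _ _ h => h) _ _ (reach_sink s a))
        (show edgeOf (.node2 t s) (.inl (.inr (sinkOf s))) (.inr .unit) from rfl)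
  | .node2 _ _, .inr .unit => ReflTransGen.refl

theorem no_edge_sink_node1 (t : ITree) (u : PUnit) (z : Pos (.node1 t)) :
    ¬ edgeOf (.node1 t) (.inr u) z := by
  cases u; cases z <;> exact id

theorem no_edge_sink_node2 (t s : ITree) (u : PUnit) (z : Pos (.node2 t s)) :
    ¬ edgeOf (.node2 t s) (.inr u) z := by
  cases u; rcases z with (a | a) | u <;> first | exact id | (cases a <;> exact id)

/-- L1: ancestry inside the parent copy of `node1`. -/
theorem anc_node1_inl (t : ITree) (a b : Pos t) :
    ReflTransGen (edgeOf (.node1 t)) (.inl a) (.inl b) ↔ ReflTransGen (edgeOf t) a b := by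
  constructor
  · intro h
    refine rtg_reflect Sum.inl (fun _ _ => Sum.inl.inj) ?_ h
    intro u w hw
    rcases w with v | v
    · exact Or.inl ⟨v, rfl, hw⟩
    · exact Or.inr ⟨fun v hv => (by cases hv), fun z => no_edge_sink_node1 t v z⟩
  · intro h
    exact ReflTransGen.lift Sum.inl (fun _ _ h => h) _ _ h

/-- the right-plus-sink embedding into `node2`. -/
def g2 (t s : ITree) : Pos (.node1 s) → Pos (.node2 t s) :=
  Sum.elim (fun a => Sum.inl (Sum.inr a)) Sum.inr

theorem g2_inj (t s : ITree) : Function.Injective (g2 t s) := by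
  rintro (a | ⟨⟩) (b | ⟨⟩) h
  · injection h with h2; injection h2 with h3; rw [h3]
  · exact absurd h (by intro h'; cases h')
  · exact absurd h (by intro h'; cases h')
  · rfl

/-- L3: ancestry inside the left copy of `node2`. -/
theorem anc_node2_left (t s : ITree) (a b : Pos t) :
    ReflTransGen (edgeOf (.node2 t s)) (.inl (.inl a)) (.inl (.inl b)) ↔ ReflTransGen (edgeOf t) a b := by
  constructor
  · intro h
    refine rtg_reflect (fun x : Pos t => Sum.inl (Sum.inl x))
      (fun x y hxy => by simpa using hxy) ?_ h
    intro u w hw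
    rcases w with (v | v) | v
    · exact Or.inl ⟨v, rfl, hw⟩
    · exact absurd hw (by exact id)
    · exact Or.inr ⟨fun x hx => (by cases hx), fun z => no_edge_sink_node2 t s v z⟩
  · intro h
    exact ReflTransGen.lift (fun x => Sum.inl (Sum.inl x)) (fun _ _ h => h) _ _ h

/-- L4: ancestry inside the right copy plus sink of `node2`. -/
theorem anc_node2_right (t s : ITree) (u v : Pos (.node1 s)) :
    ReflTransGen (edgeOf (.node2 t s)) (g2 t s u) (g2 t s v) ↔ ReflTransGen (edgeOf (.node1 s)) u v := by
  constructor
  · intro h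
    refine rtg_reflect (g2 t s) (g2_inj t s) ?_ h
    rintro (a | a) w hw
    · rcases w with (b | b) | b
      · exact absurd hw (by exact id)
      · exact Or.inl ⟨Sum.inl b, rfl, hw⟩
      · exact Or.inl ⟨Sum.inr b, rfl, hw⟩
    · exact absurd hw (no_edge_sink_node2 t s a w)
  · intro h
    refine ReflTransGen.lift (g2 t s) ?_ _ _ h
    rintro (a | a) (b | b) hab <;> first | exact hab | exact absurd hab id

/-- L5: nothing in the right copy / sink is an ancestor of a left-copy vertex. -/
theorem not_anc_right_left (t s : ITree) (u : Pos (.node1 s)) (b : Pos t) :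
    ¬ ReflTransGen (edgeOf (.node2 t s)) (g2 t s u) (.inl (.inl b)) := by
  intro h
  have : ∃ v, (Sum.inl (Sum.inl b) : Pos (.node2 t s)) = g2 t s v := by
    refine rtg_invariant (P := fun w => ∃ v, w = g2 t s v) ?_ h ⟨u, rfl⟩
    rintro x y ⟨(a | a), rfl⟩ hxy
    · rcases y with (c | c) | c
      · exact absurd hxy (by exact id)
      · exact ⟨Sum.inl c, rfl⟩
      · exact ⟨Sum.inr c, rfl⟩
    · exact absurd hxy (no_edge_sink_node2 t s a y)
  rcases this with ⟨(v | v), hv⟩ <;> cases hv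

/-- L2: the sink of `node1` is an ancestor of nothing else. -/
theorem not_anc_sink_node1 (t : ITree) (u : PUnit) (b : Pos t) :
    ¬ ReflTransGen (edgeOf (.node1 t)) (.inr u) (.inl b) := by
  intro h
  cases rtg_dead h (no_edge_sink_node1 t u)

/-- A tree shape admits a correct strategy of height at most `k`. -/
def Good (t : ITree) (k : ℕ) : Prop :=
  ∃ s : Strategy (Pos t),
    (∀ f, s.run (fun u v => ReflTransGen (edgeOf t) u v) f = f) ∧ s.height ≤ k

theorem good_leaf : Good .leaf 0 :=
  ⟨.leaf .unit, fun f => by cases f; rfl, le_refl 0⟩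

theorem good_node1 {t : ITree} {k : ℕ} (h : Good t k) : Good (.node1 t) (k + 1) := by
  obtain ⟨s, hs, hk⟩ := h
  refine ⟨.node (Sum.inl (sinkOf t)) (s.map Sum.inl) (.leaf (Sum.inr .unit)), ?_, ?_⟩
  · rintro (a | u)
    · have hyes : ReflTransGen (edgeOf (.node1 t)) (.inl a) (.inl (sinkOf t)) :=
        (anc_node1_inl t a (sinkOf t)).2 (reach_sink t a)
      simp only [Strategy.run, if_pos hyes]
      rw [Strategy.run_map (fun u v => ReflTransGen (edgeOf (ITree.node1 t)) u v) (fun u v => ReflTransGen (edgeOf t) u v) Sum.inl s a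
        (fun q => anc_node1_inl t a q), hs]
      exact if_pos hyes
    · cases u
      simp only [Strategy.run,
        if_neg (not_anc_sink_node1 t PUnit.unit (sinkOf t))]
      exact if_neg (not_anc_sink_node1 t PUnit.unit (sinkOf t))
  · simp only [Strategy.height, Strategy.height_map]
    have := Strategy.height_map (W := Pos (.node1 t)) Sum.inl s
    omega

theorem good_node2 {t s : ITree} {k : ℕ} (hL : Good t k) (hR : Good (.node1 s) k) :
    Good (.node2 t s) (k + 1) := by
  obtain ⟨sL, hsL, hkL⟩ := hL
  obtain ⟨sR, hsR, hkR⟩ := hR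
  refine ⟨.node (Sum.inl (Sum.inl (sinkOf t)))
      (sL.map (fun x => Sum.inl (Sum.inl x))) (sR.map (g2 t s)), ?_, ?_⟩
  · have run_right : ∀ u : Pos (.node1 s),
        (Strategy.node (Sum.inl (Sum.inl (sinkOf t)))
          (sL.map (fun x => Sum.inl (Sum.inl x))) (sR.map (g2 t s))).run
          (fun u v => ReflTransGen (edgeOf (.node2 t s)) u v) (g2 t s u) = g2 t s u := by
      intro u
      simp only [Strategy.run, if_neg (not_anc_right_left t s u (sinkOf t))]
      exact (Strategy.run_map (fun u v => ReflTransGen (edgeOf (ITree.node2 t s)) u v) (fun u v => ReflTransGen (edgeOf (.node1 s)) u v)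
        (g2 t s) sR u (fun q => anc_node2_right t s u q)).trans (by rw [hsR])
    rintro ((a | a) | u)
    · have hyes : ReflTransGen (edgeOf (.node2 t s)) (.inl (.inl a))
          (.inl (.inl (sinkOf t))) :=
        (anc_node2_left t s a (sinkOf t)).2 (reach_sink t a)
      simp only [Strategy.run, if_pos hyes]
      rw [Strategy.run_map (fun u v => ReflTransGen (edgeOf (ITree.node2 t s)) u v) (fun u v => ReflTransGen (edgeOf t) u v)
        (fun x => Sum.inl (Sum.inl x)) sL a (fun q => anc_node2_left t s a q), hsL]
    · exact run_right (Sum.inl a)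
    · exact run_right (Sum.inr u)
  · simp only [Strategy.height, Strategy.height_map]
    have := Strategy.height_map (W := Pos (.node2 t s)) (fun x => Sum.inl (Sum.inl x)) sL
    omega

theorem good_fib : ∀ n : ℕ,
    Good (FibTree (n + 2)) (n + 1) ∧ Good (.node1 (FibTree (n + 1))) (n + 1) := by
  intro n
  induction n with
  | zero => exact ⟨good_node1 good_leaf, good_node1 good_leaf⟩
  | succ n ih =>
    obtain ⟨hA, hB⟩ := ih
    exact ⟨good_node2 hA hB, good_node1 hA⟩

/-- For every `i ≥ 2` there are strategies solving the Regression Search Problem on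
`F_i` and on `F'_{i-1}` (a new sink whose single parent is the sink of `F_{i-1}`,
here `ITree.node1 (FibTree (i-1))`) using at most `i - 1` queries in the worst case. -/
theorem fibtree_strategies (i : ℕ) (hi : 2 ≤ i) :
    (∃ s : Strategy (Pos (FibTree i)),
      (∀ f, s.run (fun u v => Relation.ReflTransGen (edgeOf (FibTree i)) u v) f = f) ∧
      s.height ≤ i - 1) ∧
    (∃ s : Strategy (Pos (ITree.node1 (FibTree (i - 1)))),
      (∀ f, s.run
          (fun u v => Relation.ReflTransGen (edgeOf (ITree.node1 (FibTree (i - 1)))) u v)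
          f = f) ∧
      s.height ≤ i - 1) := by
  obtain ⟨n, rfl⟩ : ∃ n, i = n + 2 := ⟨i - 2, by omega⟩
  obtain ⟨hA, hB⟩ := good_fib n
  constructor
  · obtain ⟨s, hs, hk⟩ := hA
    exact ⟨s, hs, by omega⟩
  · have h1 : n + 2 - 1 = n + 1 := by omega
    rw [h1]
    obtain ⟨s, hs, hk⟩ := hB
    exact ⟨s, hs, by omega⟩
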